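/- Let B = {B_j}_{j=1}^s be a partition of H and C = {C_k}_{k=1}^t a partition of N, and let c* = max_k |C_k|. Then the group V(B) × W(C) × {id} ≤ G is regular if and only if gcd( gcd(|B_1|,...,|B_s|), c*! ) = 1. -/

import Mathlib

/-- A preference profile: each individual `i : Fin h` has a linear order on the `n`
alternatives, identified with the permutation of `Fin n` mapping ranks to alternatives. -/
abbrev Profile (h n : Nat) := Fin h → Equiv.Perm (Fin n)

/-- The order-reversing permutation `ρ₀`. -/
def rho0 (n : Nat) : Equiv.Perm (Fin n) := Fin.revPerm

/-- The subgroup `Ω = {id, ρ₀}` of `S_n` (generated by `ρ₀`, which has order 2). -/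
def Omega (n : Nat) : Subgroup (Equiv.Perm (Fin n)) := Subgroup.zpowers (rho0 n)

/-- `ρ₀` as an element of `Ω`. -/
def omegaRho0 (n : Nat) : Omega n := ⟨rho0 n, Subgroup.mem_zpowers _⟩

/-- The group `G = S_h × S_n × Ω`. -/
abbrev GG (h n : Nat) := Equiv.Perm (Fin h) × Equiv.Perm (Fin n) × (Omega n)

/-- The action of `(φ, ψ, ρ) ∈ G` on a profile: `(p^{(φ,ψ,ρ)})_i = ψ p_{φ⁻¹(i)} ρ`. -/
def act {h n : Nat} (g : GG h n) (p : Profile h n) : Profile h n :=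
  fun i => g.2.1 * p (g.1⁻¹ i) * (g.2.2 : Equiv.Perm (Fin n))

/-- A rule `F` is `U`-symmetric if `F(p^{(φ,ψ,ρ)}) = ψ F(p) ρ` for all `p` and `(φ,ψ,ρ) ∈ U`. -/
def USymm {h n : Nat} (U : Set (GG h n)) (F : Profile h n → Equiv.Perm (Fin n)) : Prop :=
  ∀ p : Profile h n, ∀ g ∈ U, F (act g p) = g.2.1 * F p * (g.2.2 : Equiv.Perm (Fin n))

/-- `S₁^U(p) = { q : ψ q ρ = q for all (φ,ψ,ρ) in the stabilizer of p in U }`. -/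
def S1set {h n : Nat} (U : Set (GG h n)) (p : Profile h n) : Set (Equiv.Perm (Fin n)) :=
  {q | ∀ g ∈ U, act g p = p → g.2.1 * q * (g.2.2 : Equiv.Perm (Fin n)) = q}

/-- Regularity of `U`: for every profile `p` there is `ψ*` conjugate to `ρ₀` with
`Stab_U(p) ⊆ (S_h × {id} × {id}) ∪ (S_h × {ψ*} × {ρ₀})`. -/
def Regular {h n : Nat} (U : Set (GG h n)) : Prop :=
  ∀ p : Profile h n, ∃ ψs : Equiv.Perm (Fin n), IsConj (rho0 n) ψs ∧
    ∀ g ∈ U, act g p = p →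
      (g.2.1 = 1 ∧ (g.2.2 : Equiv.Perm (Fin n)) = 1) ∨
      (g.2.1 = ψs ∧ (g.2.2 : Equiv.Perm (Fin n)) = rho0 n)

/-- Number of individuals strictly preferring `x` to `y` in profile `p`
(smaller rank = better, since permutations send ranks to alternatives). -/
def prefCount {h n : Nat} (p : Profile h n) (x y : Fin n) : Nat :=
  (Finset.univ.filter fun i => (p i)⁻¹ x < (p i)⁻¹ y).card

/-- `C_ν(p)`: linear orders consistent with the `ν`-majority principle applied to `p`. -/
def Cset {h n : Nat} (p : Profile h n) (ν : Nat) : Set (Equiv.Perm (Fin n)) :=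
  {q | ∀ x y : Fin n, ν ≤ prefCount p x y → q⁻¹ x < q⁻¹ y}

/-- `ν(p)`: the minimal majority threshold `ν ∈ ℕ ∩ (h/2, h]` with `C_ν(p) ≠ ∅`. -/
noncomputable def nuMin {h n : Nat} (p : Profile h n) : Nat :=
  sInf {ν : Nat | h < 2 * ν ∧ ν ≤ h ∧ (Cset p ν).Nonempty}

/-- minimal majority rule. -/
def MinMaj {h n : Nat} (F : Profile h n → Equiv.Perm (Fin n)) : Prop :=
  ∀ p : Profile h n, F p ∈ Cset p (nuMin p)

/-- `gcd(T(φ))`: the gcd of the lengths of the orbits (cycles) of `φ`. -/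
noncomputable def gcdOrbits {h : Nat} (phi : Equiv.Perm (Fin h)) : Nat :=
  Finset.univ.gcd fun i => Function.minimalPeriod (⇑phi) i


set_option linter.unusedSectionVars false

section Aux
variable {α : Type*} [Fintype α] [DecidableEq α]

private lemma permMinPerPos (φ : Equiv.Perm α) (x : α) : 0 < Function.minimalPeriod ⇑φ x := by
  apply Function.minimalPeriod_pos_of_mem_periodicPts
  exact ⟨orderOf φ, orderOf_pos φ, by
    show (⇑φ)^[orderOf φ] x = x
    rw [Equiv.Perm.iterate_eq_pow, pow_orderOf_eq_one]; rfl⟩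

private lemma orbit_mem (φ : Equiv.Perm α) {s : Finset α} (hs : ∀ i ∈ s, φ i ∈ s)
    {x : α} (hx : x ∈ s) (k : ℕ) : (φ ^ k) x ∈ s := by
  induction k with
  | zero => simpa using hx
  | succ k ih => rw [pow_succ', Equiv.Perm.mul_apply]; exact hs _ ih

private lemma orbit_card (φ : Equiv.Perm α) (x : α) :
    ((Finset.range (Function.minimalPeriod ⇑φ x)).image fun k => (φ ^ k) x).card
      = Function.minimalPeriod ⇑φ x := by
  rw [Finset.card_image_of_injOn, Finset.card_range]
  rw [Finset.coe_range]
  simpa [Equiv.Perm.iterate_eq_pow] using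
    Function.iterate_injOn_Iio_minimalPeriod (f := ⇑φ) (x := x)

private lemma pow_minimalPeriod_apply (φ : Equiv.Perm α) (x : α) :
    (φ ^ Function.minimalPeriod ⇑φ x) x = x := by
  have := Function.isPeriodicPt_minimalPeriod ⇑φ x
  rwa [Function.IsPeriodicPt, Function.IsFixedPt, Equiv.Perm.iterate_eq_pow] at this

private lemma minPer_le_card (φ : Equiv.Perm α) {s : Finset α} (hs : ∀ i ∈ s, φ i ∈ s)
    {x : α} (hx : x ∈ s) : Function.minimalPeriod ⇑φ x ≤ s.card := by
  rw [← orbit_card φ x]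
  exact Finset.card_le_card (fun y hy => by
    obtain ⟨k, -, rfl⟩ := Finset.mem_image.mp hy
    exact orbit_mem φ hs hx k)

private lemma dvd_card_of_dvd_minPer (φ : Equiv.Perm α) (m : ℕ)
    (hm : ∀ x : α, m ∣ Function.minimalPeriod ⇑φ x) :
    ∀ s : Finset α, (∀ i ∈ s, φ i ∈ s) → m ∣ s.card := by
  intro s
  induction s using Finset.strongInductionOn with
  | _ s ih =>
    intro hinv
    rcases s.eq_empty_or_nonempty with rfl | ⟨x, hx⟩
    · simp
    · set d := Function.minimalPeriod ⇑φ x with hd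
      set O : Finset α := (Finset.range d).image fun k => (φ ^ k) x with hO
      have hdpos : 0 < d := permMinPerPos φ x
      have hxO : x ∈ O := Finset.mem_image.mpr ⟨0, Finset.mem_range.mpr hdpos, by simp⟩
      have hOs : O ⊆ s := fun y hy => by
        obtain ⟨k, -, rfl⟩ := Finset.mem_image.mp hy
        exact orbit_mem φ hinv hx k
      have hOinv : ∀ y ∈ O, φ y ∈ O := by
        intro y hy
        obtain ⟨k, hk, rfl⟩ := Finset.mem_image.mp hy
        rw [Finset.mem_range] at hk
        have : φ ((φ ^ k) x) = (φ ^ (k + 1)) x := by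
          rw [pow_succ', Equiv.Perm.mul_apply]
        rw [this]
        rcases eq_or_lt_of_le (Nat.succ_le_of_lt hk) with heq | hlt
        · rw [show k + 1 = d from heq, hd, pow_minimalPeriod_apply]; exact hxO
        · exact Finset.mem_image.mpr ⟨k + 1, Finset.mem_range.mpr hlt, rfl⟩
      have hOim : O.image ⇑φ = O :=
        Finset.eq_of_subset_of_card_le
          (fun y hy => by obtain ⟨z, hz, rfl⟩ := Finset.mem_image.mp hy; exact hOinv z hz)
          (by rw [Finset.card_image_of_injective _ φ.injective])
      have hcompl : ∀ y ∈ s \ O, φ y ∈ s \ O := by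
        intro y hy
        rw [Finset.mem_sdiff] at hy ⊢
        refine ⟨hinv y hy.1, fun hmem => hy.2 ?_⟩
        rw [← hOim] at hmem
        obtain ⟨z, hz, hzz⟩ := Finset.mem_image.mp hmem
        rwa [← φ.injective hzz]
      have hssub : s \ O ⊂ s := Finset.sdiff_ssubset hOs ⟨x, hxO⟩
      have h1 : m ∣ (s \ O).card := ih _ hssub hcompl
      have h2 : m ∣ O.card := by rw [hO, orbit_card]; exact hm x
      have hsum := Finset.card_sdiff_add_card_eq_card hOs
      rw [← hsum]
      exact Nat.dvd_add h1 h2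

private lemma pow_mod_eq' {G : Type*} [Group G] {x : G} {c : ℕ} (hc : x ^ c = 1) (m : ℕ) :
    x ^ (m % c) = x ^ m := by
  conv_rhs => rw [← Nat.div_add_mod m c]
  rw [pow_add, pow_mul, hc, one_pow, one_mul]

private lemma exists_block_perm {m : ℕ} {ι : Type*} [Fintype ι] [DecidableEq ι]
    (B : ι → Finset (Fin m))
    (hBne : ∀ j, (B j).Nonempty) (hBdisj : ∀ j j', j ≠ j' → Disjoint (B j) (B j'))
    (hBcov : ∀ i, ∃ j, i ∈ B j) :
    ∃ (φ : Equiv.Perm (Fin m)) (a : Fin m → ℕ) (cl : Fin m → ι),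
      (∀ j, (B j).image ⇑φ = B j) ∧
      (∀ i, i ∈ B (cl i)) ∧
      (∀ i, a (φ i) % (B (cl i)).card = (a i + 1) % (B (cl i)).card) := by
  classical
  choose cl hcl using hBcov
  have uniq : ∀ {i : Fin m} {j : ι}, i ∈ B j → j = cl i := by
    intro i j hj
    by_contra hne
    exact Finset.disjoint_left.mp (hBdisj j (cl i) hne) hj (hcl i)
  have hpos : ∀ j, 0 < (B j).card := fun j => Finset.card_pos.mpr (hBne j)
  let e : ∀ j, ↥(B j) ≃ Fin (B j).card := fun j => (B j).equivFin
  let r : ∀ j, Equiv.Perm (Fin (B j).card) := fun j =>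
    haveI : NeZero (B j).card := ⟨(hpos j).ne'⟩
    Equiv.addRight 1
  let cyc : ∀ j, ↥(B j) ≃ ↥(B j) := fun j => (e j).trans ((r j).trans (e j).symm)
  let f : Fin m → Fin m := fun i => ↑(cyc (cl i) ⟨i, hcl i⟩)
  have hf : ∀ (i : Fin m) (j : ι) (hj : i ∈ B j), f i = ↑(cyc j ⟨i, hj⟩) := by
    intro i j hj
    have h := uniq hj
    subst h
    rfl
  have hfmem : ∀ i, f i ∈ B (cl i) := fun i => (cyc (cl i) ⟨i, hcl i⟩).2
  have hfmem' : ∀ (i : Fin m) (j : ι), i ∈ B j → f i ∈ B j := by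
    intro i j hj
    rw [hf i j hj]
    exact (cyc j ⟨i, hj⟩).2
  have hinj : Function.Injective f := by
    intro i i' hii
    have hcc : cl i = cl i' := by
      by_contra hne
      exact Finset.disjoint_left.mp (hBdisj (cl i) (cl i') hne)
        (hfmem i) (hii ▸ hfmem i')
    have hi' : i' ∈ B (cl i) := by rw [hcc]; exact hcl i'
    rw [hf i (cl i) (hcl i), hf i' (cl i) hi'] at hii
    have := (cyc (cl i)).injective (Subtype.coe_injective hii)
    exact congrArg Subtype.val this
  let φ : Equiv.Perm (Fin m) := Equiv.ofBijective f (Finite.injective_iff_bijective.mp hinj)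
  have hφ : ∀ i, φ i = f i := fun i => rfl
  let a : Fin m → ℕ := fun i => ((e (cl i)) ⟨i, hcl i⟩ : ℕ)
  have ha : ∀ (i : Fin m) (j : ι) (hj : i ∈ B j), a i = ((e j) ⟨i, hj⟩ : ℕ) := by
    intro i j hj
    have h := uniq hj
    subst h
    rfl
  refine ⟨φ, a, cl, ?_, hcl, ?_⟩
  · intro j
    apply Finset.eq_of_subset_of_card_le
    · intro y hy
      obtain ⟨i, hi, rfl⟩ := Finset.mem_image.mp hy
      rw [hφ]
      exact hfmem' i j hi
    · rw [Finset.card_image_of_injective _ φ.injective]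
  · intro i
    set j := cl i with hj
    haveI : NeZero (B j).card := ⟨(hpos j).ne'⟩
    have h1 : a (φ i) = ((e j) ⟨f i, hfmem i⟩ : ℕ) := by
      rw [hφ]; exact ha (f i) j (hfmem i)
    have h2 : (⟨f i, hfmem i⟩ : ↥(B j)) = cyc j ⟨i, hcl i⟩ :=
      Subtype.ext (hf i j (hcl i))
    have h3 : (e j) (cyc j ⟨i, hcl i⟩) = (e j) ⟨i, hcl i⟩ + 1 := by
      show (e j) ((e j).symm ((r j) ((e j) ⟨i, hcl i⟩))) = _
      rw [Equiv.apply_symm_apply]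
      rfl
    rw [h1, h2, h3, Fin.val_add, Fin.val_one']
    have hmm : ((a i : ℕ) + 1 % (B j).card) % (B j).card = (a i + 1) % (B j).card :=
      Nat.ModEq.add_left _ (Nat.mod_modEq 1 _)
    rw [Nat.mod_mod_of_dvd _ dvd_rfl]
    exact hmm

open Fin.NatCast in
private lemma exists_small_cycle {n q : ℕ} (hq : 2 ≤ q) (s0 : Finset (Fin n))
    (hs0 : s0.card = q) :
    ∃ ψ : Equiv.Perm (Fin n), ψ ≠ 1 ∧ ψ ^ q = 1 ∧
      (∀ x, x ∉ s0 → ψ x = x) ∧ (∀ x ∈ s0, ψ x ∈ s0) := by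
  classical
  haveI : NeZero q := ⟨by omega⟩
  let e0 : ↥s0 ≃ Fin q := s0.equivFin.trans (finCongr hs0)
  let rot : Equiv.Perm ↥s0 := e0.trans ((Equiv.addRight (1 : Fin q)).trans e0.symm)
  let ψ : Equiv.Perm (Fin n) := Equiv.Perm.ofSubtype rot
  have hmem : ∀ (x : Fin n) (hx : x ∈ s0), ψ x = ↑(rot ⟨x, hx⟩) := fun x hx =>
    Equiv.Perm.ofSubtype_apply_of_mem rot hx
  have hrot : ∀ (y : ↥s0), rot y = e0.symm (e0 y + 1) := fun y => rfl
  have hrotpow : ∀ (k : ℕ) (y : ↥s0), (rot ^ k) y = e0.symm (e0 y + (k : Fin q)) := by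
    intro k
    induction k with
    | zero => intro y; simp
    | succ k ih =>
      intro y
      rw [pow_succ, Equiv.Perm.mul_apply, hrot, ih]
      rw [Equiv.apply_symm_apply]
      congr 1
      push_cast
      abel
  refine ⟨ψ, ?_, ?_, fun x hx => Equiv.Perm.ofSubtype_apply_of_not_mem rot hx,
    fun x hx => by rw [hmem x hx]; exact (rot ⟨x, hx⟩).2⟩
  · intro h1
    have hx := (e0.symm 0).2
    have : ψ ↑(e0.symm 0) = ↑(e0.symm 0) := by rw [h1]; rfl
    rw [hmem _ hx] at this
    have h2 : rot ⟨↑(e0.symm 0), hx⟩ = e0.symm 0 := Subtype.coe_injective this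
    rw [Subtype.coe_eta, hrot, Equiv.apply_symm_apply] at h2
    have h3 : (0 : Fin q) + 1 = 0 := e0.symm.injective h2
    have h4 := congrArg Fin.val h3
    rw [Fin.val_add, Fin.val_one', Fin.val_zero] at h4
    rw [Nat.zero_add, Nat.mod_mod_of_dvd _ dvd_rfl, Nat.mod_eq_of_lt (by omega)] at h4
    exact one_ne_zero h4
  · have : rot ^ q = 1 := by
      ext y
      rw [hrotpow, Fin.natCast_self, add_zero, Equiv.symm_apply_apply]
      rfl
    show Equiv.Perm.ofSubtype rot ^ q = 1
    rw [← map_pow, this, map_one]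

theorem stmt13 {h n : Nat} (hh : 2 ≤ h) (hn : 2 ≤ n)
    (s t : Nat) (B : Fin s → Finset (Fin h)) (C : Fin t → Finset (Fin n))
    (hBne : ∀ j, (B j).Nonempty)
    (hBdisj : ∀ j j', j ≠ j' → Disjoint (B j) (B j'))
    (hBcov : ∀ i : Fin h, ∃ j, i ∈ B j)
    (hCne : ∀ k, (C k).Nonempty)
    (hCdisj : ∀ k k', k ≠ k' → Disjoint (C k) (C k'))
    (hCcov : ∀ x : Fin n, ∃ k, x ∈ C k) :
    Regular {g : GG h n | (∀ j, (B j).image ⇑g.1 = B j) ∧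
        (∀ k, (C k).image ⇑g.2.1 = C k) ∧ (g.2.2 : Equiv.Perm (Fin n)) = 1} ↔
      Nat.gcd (Finset.univ.gcd fun j => (B j).card)
        (Finset.univ.sup fun k => (C k).card).factorial = 1 := by
  have hrho : rho0 n ≠ 1 := by
    intro hr
    have h0 : (rho0 n) ⟨0, by omega⟩ = ⟨0, by omega⟩ := by rw [hr]; rfl
    have hv : ((⟨0, by omega⟩ : Fin n).rev : ℕ) = 0 := congrArg Fin.val h0
    simp only [Fin.val_rev] at hv
    omega
  constructor
  · -- Regular → gcd = 1
    intro hreg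
    by_contra hne
    set d := Nat.gcd (Finset.univ.gcd fun j => (B j).card)
      (Finset.univ.sup fun k => (C k).card).factorial with hdd
    set q := d.minFac with hqq
    have hqp : q.Prime := Nat.minFac_prime hne
    have hq2 : 2 ≤ q := hqp.two_le
    have hqd : q ∣ d := Nat.minFac_dvd d
    have hqB : ∀ j, q ∣ (B j).card := fun j =>
      (hqd.trans (Nat.gcd_dvd_left _ _)).trans (Finset.gcd_dvd (Finset.mem_univ j))
    have hqF : q ∣ (Finset.univ.sup fun k => (C k).card).factorial :=
      hqd.trans (Nat.gcd_dvd_right _ _)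
    have hqle : q ≤ Finset.univ.sup fun k => (C k).card :=
      (Nat.Prime.dvd_factorial hqp).mp hqF
    -- a block of C achieving the sup
    have htne : (Finset.univ : Finset (Fin t)).Nonempty := by
      obtain ⟨k, -⟩ := hCcov ⟨0, by omega⟩
      exact ⟨k, Finset.mem_univ k⟩
    obtain ⟨k0, -, hk0⟩ :=
      Finset.exists_mem_eq_sup (Finset.univ : Finset (Fin t)) htne fun k => (C k).card
    have hqk0 : q ≤ (C k0).card := by rw [← hk0]; exact hqle
    obtain ⟨s0, hs0sub, hs0card⟩ := Finset.exists_subset_card_eq hqk0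
    obtain ⟨ψ, hψne, hψq, hψfix, hψmem⟩ := exists_small_cycle hq2 s0 hs0card
    obtain ⟨φ, a, cl, hφB, hclmem, hamod⟩ := exists_block_perm B hBne hBdisj hBcov
    -- ψ preserves the C-blocks
    have hψC : ∀ k, (C k).image ⇑ψ = C k := by
      intro k
      apply Finset.eq_of_subset_of_card_le
      · intro y hy
        obtain ⟨x, hx, rfl⟩ := Finset.mem_image.mp hy
        by_cases hxs : x ∈ s0
        · have hxk0 : x ∈ C k0 := hs0sub hxs
          have hkk : k = k0 := by
            by_contra hkk
            exact Finset.disjoint_left.mp (hCdisj k k0 hkk) hx hxk0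
          subst hkk
          exact hs0sub (hψmem x hxs)
        · rw [hψfix x hxs]; exact hx
      · rw [Finset.card_image_of_injective _ ψ.injective]
    -- the profile
    set p : Profile h n := fun i => ψ ^ a i with hp
    have hψc : ∀ i : Fin h, ψ ^ (B (cl i)).card = 1 := by
      intro i
      obtain ⟨c', hc'⟩ := hqB (cl i)
      rw [hc', pow_mul, hψq, one_pow]
    have hkey : ∀ i, p (φ i) = ψ * p i := by
      intro i
      show ψ ^ a (φ i) = ψ * ψ ^ a i
      rw [← pow_mod_eq' (hψc i) (a (φ i)), hamod i, pow_mod_eq' (hψc i), pow_succ']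
    set g : GG h n := (φ, ψ, (1 : Omega n)) with hg
    have hgU : g ∈ {g : GG h n | (∀ j, (B j).image ⇑g.1 = B j) ∧
        (∀ k, (C k).image ⇑g.2.1 = C k) ∧ (g.2.2 : Equiv.Perm (Fin n)) = 1} :=
      ⟨hφB, hψC, rfl⟩
    have hstab : act g p = p := by
      funext i
      show ψ * p (φ⁻¹ i) * ((1 : Omega n) : Equiv.Perm (Fin n)) = p i
      rw [OneMemClass.coe_one, mul_one]
      conv_rhs => rw [← Equiv.apply_symm_apply φ i]
      exact (hkey (φ⁻¹ i)).symm
    obtain ⟨ψs, -, hsp⟩ := hreg p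
    rcases hsp g hgU hstab with ⟨h1, -⟩ | ⟨-, h2⟩
    · exact hψne h1
    · exact hrho (by rw [← h2]; rfl)
  · -- gcd = 1 → Regular
    intro hgcd p
    refine ⟨rho0 n, IsConj.refl _, ?_⟩
    rintro ⟨φ, ψ, ρ⟩ ⟨hgB, hgC, hgρ⟩ hstab
    have hψ1 : ψ = 1 := by
      have hst : ∀ i, ψ * p (φ⁻¹ i) = p i := by
        intro i
        have hc := congrFun hstab i
        show _ = p i
        rw [← hc]
        show ψ * p (φ⁻¹ i) = ψ * p (φ⁻¹ i) * (ρ : Equiv.Perm (Fin n))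
        rw [hgρ, mul_one]
      have h1 : ∀ i, p (φ i) = ψ * p i := by
        intro i
        have := hst (φ i)
        rw [Equiv.Perm.inv_def, Equiv.symm_apply_apply] at this
        exact this.symm
      have hiter : ∀ (k : ℕ) (i : Fin h), p ((φ ^ k) i) = ψ ^ k * p i := by
        intro k
        induction k with
        | zero => intro i; simp
        | succ k ih =>
          intro i
          rw [pow_succ', Equiv.Perm.mul_apply, h1, ih, pow_succ' ψ k, mul_assoc]
      have hdvd : ∀ i : Fin h, orderOf ψ ∣ Function.minimalPeriod ⇑φ i := by
        intro i
        apply orderOf_dvd_of_pow_eq_one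
        have hh2 := hiter (Function.minimalPeriod ⇑φ i) i
        rw [pow_minimalPeriod_apply] at hh2
        exact mul_eq_right.mp hh2.symm
      have hBdvd : orderOf ψ ∣ Finset.univ.gcd fun j => (B j).card := by
        apply Finset.dvd_gcd
        intro j _
        exact dvd_card_of_dvd_minPer φ (orderOf ψ) hdvd (B j)
          (fun i hi => by rw [← hgB j]; exact Finset.mem_image_of_mem _ hi)
      have hCdvd : orderOf ψ ∣ (Finset.univ.sup fun k => (C k).card).factorial := by
        apply orderOf_dvd_of_pow_eq_one
        ext x
        obtain ⟨k, hk⟩ := hCcov x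
        have hinv : ∀ y ∈ C k, ψ y ∈ C k := fun y hy => by
          rw [← hgC k]; exact Finset.mem_image_of_mem _ hy
        have hdpos := permMinPerPos ψ x
        have hdle : Function.minimalPeriod ⇑ψ x ≤ (C k).card := minPer_le_card ψ hinv hk
        have hdf : Function.minimalPeriod ⇑ψ x ∣
            (Finset.univ.sup fun k => (C k).card).factorial :=
          Nat.dvd_factorial hdpos (le_trans hdle (Finset.le_sup (f := fun k => (C k).card) (Finset.mem_univ k)))
        have hper := (Function.isPeriodicPt_minimalPeriod ⇑ψ x).trans_dvd hdf
        rw [Function.IsPeriodicPt, Function.IsFixedPt, Equiv.Perm.iterate_eq_pow] at hper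
        exact congrArg Fin.val hper
      have : orderOf ψ ∣ 1 := hgcd ▸ Nat.dvd_gcd hBdvd hCdvd
      exact orderOf_eq_one_iff.mp (Nat.dvd_one.mp this)
    exact Or.inl ⟨hψ1, hgρ⟩
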